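/- arXiv:2308.02464 — 2 statements merged into one kernel-verified Lean document; each statement's English description precedes it below -/
import Mathlib

section
/- For M = 2 and distinct β_1, β_2, α ∈ (-1,1), the projection error of s_α/‖s_α‖ onto span(s_{β_1}, s_{β_2}) in ℓ² equals ε = 1 - [(1-α²)(1-β_1β_2)/(β_1-β_2)²]·[(1-β_1²)(1-β_1β_2)/(1-αβ_1)² - 2(1-β_1²)(1-β_2²)/((1-αβ_1)(1-αβ_2)) + (1-β_2²)(1-β_1β_2)/(1-αβ_2)²]. -/
set_option maxHeartbeats 1000000

open Matrix

theorem stmt_5 (α β₁ β₂ : ℝ) (hα : α ∈ Set.Ioo (-1 : ℝ) 1)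
    (hβ₁ : β₁ ∈ Set.Ioo (-1 : ℝ) 1) (hβ₂ : β₂ ∈ Set.Ioo (-1 : ℝ) 1) (hne : β₁ ≠ β₂)
    (Sig : Matrix (Fin 2) (Fin 2) ℝ)
    (hSig : Sig = !![1 / (1 - β₁ * β₁), 1 / (1 - β₁ * β₂); 1 / (1 - β₂ * β₁), 1 / (1 - β₂ * β₂)])
    (r : Fin 2 → ℝ)
    (hr : r = ![Real.sqrt (1 - α ^ 2) / (1 - α * β₁), Real.sqrt (1 - α ^ 2) / (1 - α * β₂)]) :
    1 - r ⬝ᵥ (Sig⁻¹).mulVec r =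
      1 - ((1 - α ^ 2) * (1 - β₁ * β₂) / (β₁ - β₂) ^ 2) *
        ((1 - β₁ ^ 2) * (1 - β₁ * β₂) / (1 - α * β₁) ^ 2
          - 2 * (1 - β₁ ^ 2) * (1 - β₂ ^ 2) / ((1 - α * β₁) * (1 - α * β₂))
          + (1 - β₂ ^ 2) * (1 - β₁ * β₂) / (1 - α * β₂) ^ 2) := by
  obtain ⟨ha1, ha2⟩ := hα
  obtain ⟨hb1, hb2⟩ := hβ₁
  obtain ⟨hc1, hc2⟩ := hβ₂
  have h11 : (1 : ℝ) - β₁ * β₁ ≠ 0 := by nlinarith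
  have h22 : (1 : ℝ) - β₂ * β₂ ≠ 0 := by nlinarith
  have h12 : (1 : ℝ) - β₁ * β₂ ≠ 0 := by nlinarith
  have h21 : (1 : ℝ) - β₂ * β₁ ≠ 0 := by nlinarith
  have ha1' : (1 : ℝ) - α * β₁ ≠ 0 := by nlinarith
  have ha2' : (1 : ℝ) - α * β₂ ≠ 0 := by nlinarith
  have hd : β₁ - β₂ ≠ 0 := sub_ne_zero.2 hne
  have hd2 : (β₁ - β₂) ^ 2 ≠ 0 := pow_ne_zero _ hd
  have hinv : Sig⁻¹ = !![(1 - β₁ ^ 2) * (1 - β₁ * β₂) ^ 2 / (β₁ - β₂) ^ 2,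
      -((1 - β₁ ^ 2) * (1 - β₂ ^ 2) * (1 - β₁ * β₂)) / (β₁ - β₂) ^ 2;
      -((1 - β₁ ^ 2) * (1 - β₂ ^ 2) * (1 - β₁ * β₂)) / (β₁ - β₂) ^ 2,
      (1 - β₂ ^ 2) * (1 - β₁ * β₂) ^ 2 / (β₁ - β₂) ^ 2] := by
    apply inv_eq_right_inv
    rw [hSig]
    ext i j
    fin_cases i <;> fin_cases j <;>
      simp [Matrix.mul_apply, Fin.sum_univ_two] <;> field_simp [show (1:ℝ) - β₁ ^ 2 ≠ 0 by nlinarith, show (1:ℝ) - β₂ ^ 2 ≠ 0 by nlinarith] <;> ring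
  obtain ⟨s, hs⟩ : ∃ s, s = Real.sqrt (1 - α ^ 2) := ⟨_, rfl⟩
  have hsq : s ^ 2 = 1 - α ^ 2 := by
    rw [hs]; apply Real.sq_sqrt; nlinarith
  rw [hinv, hr, ← hs]
  simp [mulVec, dotProduct, Fin.sum_univ_two]
  rw [← hsq]
  field_simp
  ring
end

section
/- For fixed β ∈ (-1,1), the derivative with respect to α of the two-pole projection error ε(α; β-Δ, β+Δ), evaluated at α = β, equals 4β(1-β²+Δ²)Δ⁴ / ((1-β²)² - β²Δ²)³. -/
/-- Two-pole projection error formula. -/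
noncomputable def epsTwo (α β₁ β₂ : ℝ) : ℝ :=
  1 - ((1 - α ^ 2) * (1 - β₁ * β₂) / (β₁ - β₂) ^ 2) *
    ((1 - β₁ ^ 2) * (1 - β₁ * β₂) / (1 - α * β₁) ^ 2
      - 2 * (1 - β₁ ^ 2) * (1 - β₂ ^ 2) / ((1 - α * β₁) * (1 - α * β₂))
      + (1 - β₂ ^ 2) * (1 - β₁ * β₂) / (1 - α * β₂) ^ 2)

theorem stmt_8 (β Δ : ℝ) (hβ : β ∈ Set.Ioo (-1 : ℝ) 1) (hΔ : 0 < Δ)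
    (h₁ : β - Δ ∈ Set.Ioo (-1 : ℝ) 1) (h₂ : β + Δ ∈ Set.Ioo (-1 : ℝ) 1)
    (hden : β ^ 2 * Δ ^ 2 < (1 - β ^ 2) ^ 2) :
    deriv (fun α => epsTwo α (β - Δ) (β + Δ)) β =
      4 * β * (1 - β ^ 2 + Δ ^ 2) * Δ ^ 4 / ((1 - β ^ 2) ^ 2 - β ^ 2 * Δ ^ 2) ^ 3 := by
  have key : ((1:ℝ) - β * (β - Δ)) * (1 - β * (β + Δ)) = (1 - β ^ 2) ^ 2 - β ^ 2 * Δ ^ 2 := by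
    ring
  have h10 : (1:ℝ) - β * (β - Δ) ≠ 0 := by
    intro h; rw [h, zero_mul] at key; nlinarith
  have h20 : (1:ℝ) - β * (β + Δ) ≠ 0 := by
    intro h; rw [h, mul_zero] at key; nlinarith
  have hdd : ((β - Δ) - (β + Δ)) ≠ 0 := by
    intro h; apply hΔ.ne'; linarith
  have hD : ((1 - β ^ 2) ^ 2 - β ^ 2 * Δ ^ 2) ≠ 0 := by nlinarith
  have d1 : HasDerivAt (fun α : ℝ => 1 - α * (β - Δ)) (0 - 1 * (β - Δ)) β :=
    (hasDerivAt_const β 1).sub ((hasDerivAt_id β).mul_const (β - Δ))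
  have d2 : HasDerivAt (fun α : ℝ => 1 - α * (β + Δ)) (0 - 1 * (β + Δ)) β :=
    (hasDerivAt_const β 1).sub ((hasDerivAt_id β).mul_const (β + Δ))
  have T1 := (hasDerivAt_const β ((1 - (β - Δ) ^ 2) * (1 - (β - Δ) * (β + Δ)))).div
    (d1.pow 2) (pow_ne_zero 2 h10)
  have T2 := (hasDerivAt_const β (2 * (1 - (β - Δ) ^ 2) * (1 - (β + Δ) ^ 2))).div
    (d1.mul d2) (mul_ne_zero h10 h20)
  have T3 := (hasDerivAt_const β ((1 - (β + Δ) ^ 2) * (1 - (β - Δ) * (β + Δ)))).div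
    (d2.pow 2) (pow_ne_zero 2 h20)
  have dP : HasDerivAt (fun α : ℝ => (1 - α ^ 2) * (1 - (β - Δ) * (β + Δ)) / ((β - Δ) - (β + Δ)) ^ 2)
      ((0 - 2 * β ^ 1) * (1 - (β - Δ) * (β + Δ)) / ((β - Δ) - (β + Δ)) ^ 2) β :=
    (((hasDerivAt_const β 1).sub (hasDerivAt_pow 2 β)).mul_const _).div_const _
  have H := (hasDerivAt_const β 1).sub (dP.mul ((T1.sub T2).add T3))
  simp only [epsTwo]
  erw [H.deriv]
  simp only [Pi.pow_apply, Pi.mul_apply, Pi.add_apply, Pi.sub_apply, Pi.div_apply]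
  push_cast
  have hdd2 : ((β - Δ) - (β + Δ)) ^ 2 ≠ 0 := pow_ne_zero _ hdd
  have hD3 : ((1 - β ^ 2) ^ 2 - β ^ 2 * Δ ^ 2) ^ 3 ≠ 0 := pow_ne_zero _ hD
  field_simp
  ring
end
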